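/- If D = {v_{i_1},...,v_{i_k}} is a dominating set of G, then D' = {v_{i_1}^1,...,v_{i_k}^1} ∪ {u_{i_1}^1,...,u_{i_k}^1} is a semipaired dominating set of the split graph G' (constructed as in the split graph reduction) of cardinality at most 2k. -/
import Mathlib


open SimpleGraph Finset

/-- `D` is a dominating set of `G`. -/
def Dominating {V : Type*} (G : SimpleGraph V) (D : Finset V) : Prop :=
  ∀ v : V, ∃ u ∈ D, u = v ∨ G.Adj u v

/-- `D` is a semipaired dominating set of `G`: a dominating set whose vertices can be
partitioned into pairs (via a fixed-point-free involution) at distance at most 2. -/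
def SemiPairedDom {V : Type*} (G : SimpleGraph V) (D : Finset V) : Prop :=
  Dominating G D ∧ ∃ f : V → V,
    (∀ u ∈ D, f u ∈ D) ∧ (∀ u ∈ D, f (f u) = u) ∧ (∀ u ∈ D, f u ≠ u) ∧
    (∀ u ∈ D, G.Adj u (f u) ∨ ∃ w, G.Adj u w ∧ G.Adj w (f u))

/-- `D` is a paired dominating set of `G`: a dominating set whose induced subgraph has a
perfect matching (encoded by a fixed-point-free involution pairing adjacent vertices). -/
def PairedDom {V : Type*} (G : SimpleGraph V) (D : Finset V) : Prop :=
  Dominating G D ∧ ∃ f : V → V,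
    (∀ u ∈ D, f u ∈ D) ∧ (∀ u ∈ D, f (f u) = u) ∧ (∀ u ∈ D, f u ≠ u) ∧
    (∀ u ∈ D, G.Adj u (f u))

/-- The domination number. -/
noncomputable def domNum (V : Type*) [Fintype V] (G : SimpleGraph V) : ℕ :=
  sInf {k : ℕ | ∃ D : Finset V, Dominating G D ∧ D.card = k}

/-- The semipaired domination number. -/
noncomputable def semiPairedDomNum (V : Type*) [Fintype V] (G : SimpleGraph V) : ℕ :=
  sInf {k : ℕ | ∃ D : Finset V, SemiPairedDom G D ∧ D.card = k}

/-- The paired domination number. -/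
noncomputable def pairedDomNum (V : Type*) [Fintype V] (G : SimpleGraph V) : ℕ :=
  sInf {k : ℕ | ∃ D : Finset V, PairedDom G D ∧ D.card = k}

/-- The split graph `G'` built from `G`: vertices `Sum.inl (Sum.inl i)` are `v_i^1`,
`Sum.inl (Sum.inr i)` are `u_i^1` (together a clique), `Sum.inr (Sum.inl i)` are `v_i^2`
and `Sum.inr (Sum.inr i)` are `u_i^2` (an independent set), with `v_i^2 v_j^1` and
`u_i^2 u_j^1` edges exactly when `v_j ∈ N_G[v_i]`. -/
def splitG {α : Type*} (G : SimpleGraph α) : SimpleGraph ((α ⊕ α) ⊕ (α ⊕ α)) :=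
  SimpleGraph.fromRel (fun u v =>
    (∃ x y : α ⊕ α, u = Sum.inl x ∧ v = Sum.inl y) ∨
    (∃ i j : α, u = Sum.inr (Sum.inl i) ∧ v = Sum.inl (Sum.inl j) ∧ (i = j ∨ G.Adj i j)) ∨
    (∃ i j : α, u = Sum.inr (Sum.inr i) ∧ v = Sum.inl (Sum.inr j) ∧ (i = j ∨ G.Adj i j)))

/-- If `D` is a dominating set of `G`, then
`D' = {v_i^1 : v_i ∈ D} ∪ {u_i^1 : v_i ∈ D}` is a semipaired dominating set of the split
graph `G'` of cardinality at most `2|D|`. -/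
theorem splitG_semiPairedDom_of_dom {α : Type*} [Fintype α] [DecidableEq α]
    (G : SimpleGraph α) (D : Finset α) (hD : Dominating G D) :
    SemiPairedDom (splitG G)
      ((D.image fun i => (Sum.inl (Sum.inl i) : (α ⊕ α) ⊕ (α ⊕ α))) ∪
        (D.image fun i => (Sum.inl (Sum.inr i) : (α ⊕ α) ⊕ (α ⊕ α)))) ∧
    ((D.image fun i => (Sum.inl (Sum.inl i) : (α ⊕ α) ⊕ (α ⊕ α))) ∪
        (D.image fun i => (Sum.inl (Sum.inr i) : (α ⊕ α) ⊕ (α ⊕ α)))).card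
      ≤ 2 * D.card := by

  constructor
  · constructor
    · intro v
      match v with
      | Sum.inl x =>
        obtain ⟨i, _⟩ : ∃ i : α, True := by
          cases x with
          | inl i => exact ⟨i, trivial⟩
          | inr i => exact ⟨i, trivial⟩
        obtain ⟨u, hu, _⟩ := hD i
        refine ⟨Sum.inl (Sum.inl u), Finset.mem_union_left _ (Finset.mem_image_of_mem _ hu), ?_⟩
        by_cases h : (Sum.inl (Sum.inl u) : (α ⊕ α) ⊕ (α ⊕ α)) = Sum.inl x
        · exact Or.inl h
        · exact Or.inr ⟨h, Or.inl (Or.inl ⟨Sum.inl u, x, rfl, rfl⟩)⟩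
      | Sum.inr (Sum.inl i) =>
        obtain ⟨u, hu, h⟩ := hD i
        refine ⟨Sum.inl (Sum.inl u), Finset.mem_union_left _ (Finset.mem_image_of_mem _ hu),
          Or.inr ⟨by simp, Or.inr (Or.inr (Or.inl ⟨i, u, rfl, rfl, ?_⟩))⟩⟩
        rcases h with h | h
        · exact Or.inl h.symm
        · exact Or.inr h.symm
      | Sum.inr (Sum.inr i) =>
        obtain ⟨u, hu, h⟩ := hD i
        refine ⟨Sum.inl (Sum.inr u), Finset.mem_union_right _ (Finset.mem_image_of_mem _ hu),
          Or.inr ⟨by simp, Or.inr (Or.inr (Or.inr ⟨i, u, rfl, rfl, ?_⟩))⟩⟩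
        rcases h with h | h
        · exact Or.inl h.symm
        · exact Or.inr h.symm
    · refine ⟨fun x => match x with
        | Sum.inl (Sum.inl i) => Sum.inl (Sum.inr i)
        | Sum.inl (Sum.inr i) => Sum.inl (Sum.inl i)
        | y => y, ?_, ?_, ?_, ?_⟩
      · intro u hu
        rcases Finset.mem_union.1 hu with h | h <;>
          obtain ⟨i, hi, rfl⟩ := Finset.mem_image.1 h
        · exact Finset.mem_union_right _ (Finset.mem_image_of_mem _ hi)
        · exact Finset.mem_union_left _ (Finset.mem_image_of_mem _ hi)
      · intro u hu
        rcases Finset.mem_union.1 hu with h | h <;>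
          obtain ⟨i, hi, rfl⟩ := Finset.mem_image.1 h <;> rfl
      · intro u hu
        rcases Finset.mem_union.1 hu with h | h <;>
          obtain ⟨i, hi, rfl⟩ := Finset.mem_image.1 h <;> simp
      · intro u hu
        rcases Finset.mem_union.1 hu with h | h <;>
          obtain ⟨i, hi, rfl⟩ := Finset.mem_image.1 h <;> left
        · exact ⟨by simp, Or.inl (Or.inl ⟨Sum.inl i, Sum.inr i, rfl, rfl⟩)⟩
        · exact ⟨by simp, Or.inl (Or.inl ⟨Sum.inr i, Sum.inl i, rfl, rfl⟩)⟩
  · calc _ ≤ (D.image fun i => (Sum.inl (Sum.inl i) : (α ⊕ α) ⊕ (α ⊕ α))).card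
            + (D.image fun i => (Sum.inl (Sum.inr i) : (α ⊕ α) ⊕ (α ⊕ α))).card :=
          Finset.card_union_le _ _
      _ ≤ D.card + D.card := Nat.add_le_add (Finset.card_image_le) (Finset.card_image_le)
      _ = 2 * D.card := (two_mul _).symm
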